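/- Let B be the sketch produced by the Frequent Directions algorithm with sketch size ℓ applied to an n×d matrix A. Then for any k < ℓ, ‖A^T A − B^T B‖₂ ≤ ‖A − A_k‖_F² / (ℓ − k). -/

import Mathlib

open Matrix MeasureTheory
open scoped InnerProductSpace

/-- Spectral (operator) norm of a real matrix, as the operator norm of the induced
Euclidean linear map. -/
noncomputable def specNorm {m n : Type*} [Fintype m] [Fintype n] [DecidableEq n]
    (A : Matrix m n ℝ) : ℝ :=
  ‖LinearMap.toContinuousLinearMap (Matrix.toEuclideanLin A)‖

/-- Frobenius norm of a real matrix. -/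
noncomputable def frobNorm {m n : Type*} [Fintype m] [Fintype n] (A : Matrix m n ℝ) : ℝ :=
  Real.sqrt (∑ i, ∑ j, (A i j) ^ 2)

/-- `Ak` is a best rank-`k` approximation of `A` in Frobenius norm. -/
def IsBestRankApprox {n d : Type*} [Fintype n] [Fintype d] [DecidableEq d]
    (A Ak : Matrix n d ℝ) (k : ℕ) : Prop :=
  Ak.rank ≤ k ∧ ∀ C : Matrix n d ℝ, C.rank ≤ k → frobNorm (A - Ak) ≤ frobNorm (A - C)

/-- The `j`-th largest eigenvalue of a Hermitian matrix (eigenvalues sorted decreasingly). -/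
noncomputable def sortedEigs {d : ℕ} {M : Matrix (Fin d) (Fin d) ℝ} (hM : M.IsHermitian)
    (j : Fin d) : ℝ :=
  ((List.ofFn hM.eigenvalues).insertionSort (· ≥ ·)).get
    ⟨j.1, by simp only [List.length_insertionSort, List.length_ofFn]; exact j.2⟩

/-- One step of the (simple) Frequent Directions algorithm with sketch size `ℓ`:
the new row `a` is inserted into the (zero-valued) last row of `B`; an SVD of the
resulting matrix is computed (encoded by its Gram factorization with `V` having
orthonormal columns and decreasing nonnegative singular values `σ`); and the
shrinkage `B' = sqrt(max(Σ² − σ_ℓ² I, 0)) Vᵀ` is performed. -/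
def FDStep {ℓ d : ℕ} (hℓ : 0 < ℓ) (B B' : Matrix (Fin ℓ) (Fin d) ℝ)
    (a : Fin d → ℝ) : Prop :=
  B ⟨ℓ - 1, by omega⟩ = 0 ∧
  ∃ (σ : Fin ℓ → ℝ) (V : Matrix (Fin d) (Fin ℓ) ℝ),
    Vᵀ * V = 1 ∧ Antitone σ ∧ (∀ i, 0 ≤ σ i) ∧
    (B.updateRow ⟨ℓ - 1, by omega⟩ a)ᵀ * (B.updateRow ⟨ℓ - 1, by omega⟩ a) =
      V * Matrix.diagonal (fun i => σ i ^ 2) * Vᵀ ∧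
    B' = Matrix.diagonal
        (fun i => Real.sqrt (max (σ i ^ 2 - σ ⟨ℓ - 1, by omega⟩ ^ 2) 0)) * Vᵀ

namespace FDAux

/-! ### Basic vector/Euclidean helpers -/

noncomputable def evL (d : ℕ) : (Fin d → ℝ) ≃ₗ[ℝ] EuclideanSpace ℝ (Fin d) :=
  (WithLp.linearEquiv 2 ℝ (Fin d → ℝ)).symm

noncomputable def ev {d : ℕ} (v : Fin d → ℝ) : EuclideanSpace ℝ (Fin d) := evL d v

lemma ev_apply {d : ℕ} (v : Fin d → ℝ) (i : Fin d) : ev v i = v i := rfl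

lemma inner_ev {d : ℕ} (x y : Fin d → ℝ) : ⟪ev x, ev y⟫_ℝ = x ⬝ᵥ y := by
  simp only [PiLp.inner_apply, RCLike.inner_apply, conj_trivial]
  rw [dotProduct]; exact Finset.sum_congr rfl (fun i _ => mul_comm _ _)

lemma norm_ev_sq {d : ℕ} (x : Fin d → ℝ) : ‖ev x‖ ^ 2 = x ⬝ᵥ x := by
  rw [← real_inner_self_eq_norm_sq, inner_ev]

lemma dot_self_nonneg {d : ℕ} (x : Fin d → ℝ) : 0 ≤ x ⬝ᵥ x := by
  rw [← norm_ev_sq]; positivity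

lemma dot_self_eq_sum_sq {d : ℕ} (x : Fin d → ℝ) : x ⬝ᵥ x = ∑ j, x j ^ 2 := by
  simp [dotProduct, sq]

lemma ev_sub {d : ℕ} (x y : Fin d → ℝ) : ev (x - y) = ev x - ev y := rfl

/-! ### Quadratic form and norm facts for projections V Vᵀ -/

lemma gram_dot {d m : ℕ} (M : Matrix (Fin m) (Fin d) ℝ) (u : Fin d → ℝ) :
    u ⬝ᵥ ((Mᵀ * M) *ᵥ u) = (M *ᵥ u) ⬝ᵥ (M *ᵥ u) := by
  rw [← Matrix.mulVec_mulVec, Matrix.dotProduct_mulVec, Matrix.vecMul_transpose]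

lemma proj_dot_eq {d ℓ : ℕ} (V : Matrix (Fin d) (Fin ℓ) ℝ)
    (x : Fin d → ℝ) :
    x ⬝ᵥ ((V * Vᵀ) *ᵥ x) = (Vᵀ *ᵥ x) ⬝ᵥ (Vᵀ *ᵥ x) := by
  have : V * Vᵀ = (Vᵀ)ᵀ * Vᵀ := by rw [Matrix.transpose_transpose]
  rw [this, gram_dot]

lemma proj_dot_nonneg {d ℓ : ℕ} (V : Matrix (Fin d) (Fin ℓ) ℝ) (x : Fin d → ℝ) :
    0 ≤ x ⬝ᵥ ((V * Vᵀ) *ᵥ x) := by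
  rw [proj_dot_eq]; exact dot_self_nonneg _

lemma proj_w_le {d ℓ : ℕ} (V : Matrix (Fin d) (Fin ℓ) ℝ) (hV : Vᵀ * V = 1)
    (x : Fin d → ℝ) :
    (Vᵀ *ᵥ x) ⬝ᵥ (Vᵀ *ᵥ x) ≤ x ⬝ᵥ x := by
  have hzz : (V *ᵥ (Vᵀ *ᵥ x)) ⬝ᵥ (V *ᵥ (Vᵀ *ᵥ x)) = (Vᵀ *ᵥ x) ⬝ᵥ (Vᵀ *ᵥ x) := by
    rw [Matrix.dotProduct_mulVec, ← Matrix.mulVec_transpose, Matrix.mulVec_mulVec, hV,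
      Matrix.one_mulVec]
  have hwx : (Vᵀ *ᵥ x) ⬝ᵥ (Vᵀ *ᵥ x) = x ⬝ᵥ (V *ᵥ (Vᵀ *ᵥ x)) := by
    conv_lhs => rw [Matrix.mulVec_transpose, ← Matrix.dotProduct_mulVec]
    rw [Matrix.mulVec_transpose]
  have hCS : x ⬝ᵥ (V *ᵥ (Vᵀ *ᵥ x)) ≤ ‖ev x‖ * ‖ev (V *ᵥ (Vᵀ *ᵥ x))‖ := by
    rw [← inner_ev]; exact real_inner_le_norm _ _
  have ha : ‖ev (V *ᵥ (Vᵀ *ᵥ x))‖ ^ 2 = (Vᵀ *ᵥ x) ⬝ᵥ (Vᵀ *ᵥ x) := by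
    rw [norm_ev_sq, hzz]
  have hb : ‖ev x‖ ^ 2 = x ⬝ᵥ x := norm_ev_sq x
  have h0a : (0:ℝ) ≤ ‖ev (V *ᵥ (Vᵀ *ᵥ x))‖ := norm_nonneg _
  have h0b : (0:ℝ) ≤ ‖ev x‖ := norm_nonneg _
  nlinarith [sq_nonneg (‖ev (V *ᵥ (Vᵀ *ᵥ x))‖ - ‖ev x‖)]

lemma proj_dot_le {d ℓ : ℕ} (V : Matrix (Fin d) (Fin ℓ) ℝ) (hV : Vᵀ * V = 1)
    (x : Fin d → ℝ) :
    x ⬝ᵥ ((V * Vᵀ) *ᵥ x) ≤ x ⬝ᵥ x := by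
  rw [proj_dot_eq]; exact proj_w_le V hV x

lemma norm_proj_mulVec_le {d ℓ : ℕ} (V : Matrix (Fin d) (Fin ℓ) ℝ) (hV : Vᵀ * V = 1)
    (x : Fin d → ℝ) :
    ‖ev ((V * Vᵀ) *ᵥ x)‖ ≤ ‖ev x‖ := by
  have h1 : (V * Vᵀ) *ᵥ x = V *ᵥ (Vᵀ *ᵥ x) := (Matrix.mulVec_mulVec _ _ _).symm
  have hzz : (V *ᵥ (Vᵀ *ᵥ x)) ⬝ᵥ (V *ᵥ (Vᵀ *ᵥ x)) = (Vᵀ *ᵥ x) ⬝ᵥ (Vᵀ *ᵥ x) := by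
    rw [Matrix.dotProduct_mulVec, ← Matrix.mulVec_transpose, Matrix.mulVec_mulVec, hV,
      Matrix.one_mulVec]
  have ha : ‖ev ((V * Vᵀ) *ᵥ x)‖ ^ 2 = (Vᵀ *ᵥ x) ⬝ᵥ (Vᵀ *ᵥ x) := by
    rw [norm_ev_sq, h1, hzz]
  have hb : ‖ev x‖ ^ 2 = x ⬝ᵥ x := norm_ev_sq x
  have hle := proj_w_le V hV x
  nlinarith [norm_nonneg (ev ((V * Vᵀ) *ᵥ x)), norm_nonneg (ev x)]


lemma ev_sum {d N : ℕ} (f : Fin N → (Fin d → ℝ)) : ev (∑ t, f t) = ∑ t, ev (f t) :=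
  map_sum (evL d) f Finset.univ

lemma ev_smul {d : ℕ} (c : ℝ) (v : Fin d → ℝ) : ev (c • v) = c • ev v :=
  map_smul (evL d) c v

/-! ### specNorm bounds -/

lemma toEuclideanLin_apply' {m d : ℕ} (M : Matrix (Fin m) (Fin d) ℝ)
    (x : EuclideanSpace ℝ (Fin d)) :
    Matrix.toEuclideanLin M x = ev (M *ᵥ (fun i => x i)) := rfl

lemma ev_eta {d : ℕ} (x : EuclideanSpace ℝ (Fin d)) : ev (fun i => x i) = x := rfl

lemma specNorm_le_of_bound {d : ℕ} (M : Matrix (Fin d) (Fin d) ℝ) {c : ℝ} (hc : 0 ≤ c)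
    (h : ∀ x : Fin d → ℝ, ‖ev (M *ᵥ x)‖ ≤ c * ‖ev x‖) : specNorm M ≤ c := by
  apply ContinuousLinearMap.opNorm_le_bound _ hc
  intro x
  rw [LinearMap.coe_toContinuousLinearMap', toEuclideanLin_apply']
  have := h (fun i => x i)
  rwa [ev_eta] at this

lemma sum_mulVec {d N : ℕ} (M : Fin N → Matrix (Fin d) (Fin d) ℝ) (x : Fin d → ℝ) :
    (∑ t, M t) *ᵥ x = ∑ t, (M t) *ᵥ x := by
  ext i
  simp [Matrix.mulVec, dotProduct, Matrix.sum_apply, Finset.sum_apply, Finset.sum_mul]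
  exact Finset.sum_comm

lemma specNorm_sum_proj_le {d ℓ N : ℕ} (δ : Fin N → ℝ) (V : Fin N → Matrix (Fin d) (Fin ℓ) ℝ)
    (hδ : ∀ t, 0 ≤ δ t) (hV : ∀ t, (V t)ᵀ * V t = 1) :
    specNorm (∑ t, δ t • (V t * (V t)ᵀ)) ≤ ∑ t, δ t := by
  apply specNorm_le_of_bound _ (Finset.sum_nonneg fun t _ => hδ t)
  intro x
  rw [sum_mulVec, ev_sum]
  calc ‖∑ t, ev ((δ t • (V t * (V t)ᵀ)) *ᵥ x)‖ ≤ ∑ t, ‖ev ((δ t • (V t * (V t)ᵀ)) *ᵥ x)‖ :=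
        norm_sum_le _ _
    _ ≤ ∑ t, δ t * ‖ev x‖ := by
        apply Finset.sum_le_sum
        intro t _
        rw [Matrix.smul_mulVec, ev_smul, norm_smul, Real.norm_eq_abs,
          abs_of_nonneg (hδ t)]
        exact mul_le_mul_of_nonneg_left (norm_proj_mulVec_le (V t) (hV t) x) (hδ t)
    _ = (∑ t, δ t) * ‖ev x‖ := (Finset.sum_mul _ _ _).symm

/-! ### Frobenius and trace -/

noncomputable def frobSq {m p : Type*} [Fintype m] [Fintype p] (M : Matrix m p ℝ) : ℝ :=
  ∑ i, ∑ j, (M i j) ^ 2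

lemma frobNorm_sq {m p : Type*} [Fintype m] [Fintype p] (M : Matrix m p ℝ) :
    frobNorm M ^ 2 = frobSq M :=
  Real.sq_sqrt (by positivity)

lemma frobSq_nonneg {m p : Type*} [Fintype m] [Fintype p] (M : Matrix m p ℝ) :
    0 ≤ frobSq M := by
  unfold frobSq; positivity

lemma frobSq_eq_trace {n d : ℕ} (M : Matrix (Fin n) (Fin d) ℝ) :
    frobSq M = (Mᵀ * M).trace := by
  unfold frobSq
  rw [Matrix.trace]
  simp only [Matrix.diag_apply, Matrix.mul_apply, Matrix.transpose_apply, sq]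
  exact Finset.sum_comm

lemma frobSq_eq_sum_rows {n d : ℕ} (M : Matrix (Fin n) (Fin d) ℝ) :
    frobSq M = ∑ i, ‖ev (M i)‖ ^ 2 := by
  unfold frobSq
  congr 1
  funext i
  rw [norm_ev_sq, dot_self_eq_sum_sq]

lemma trace_proj {d ℓ : ℕ} (δ : ℝ) (V : Matrix (Fin d) (Fin ℓ) ℝ) (hV : Vᵀ * V = 1) :
    (δ • (V * Vᵀ)).trace = δ * ℓ := by
  rw [Matrix.trace_smul, Matrix.trace_mul_comm, hV, Matrix.trace_one]
  simp [smul_eq_mul]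

/-! ### The Frobenius lower bound via the row space of `Ak` -/

lemma lower_bound {n d ℓ k : ℕ} (A Ak : Matrix (Fin n) (Fin d) ℝ)
    (BN : Matrix (Fin ℓ) (Fin d) ℝ) (G : Matrix (Fin d) (Fin d) ℝ) (Δ : ℝ)
    (hΔ : 0 ≤ Δ) (hrank : Ak.rank ≤ k)
    (hG : Aᵀ * A = BNᵀ * BN + G)
    (hquad : ∀ u : Fin d → ℝ, u ⬝ᵥ (G *ᵥ u) ≤ Δ * (u ⬝ᵥ u))
    (htr : frobSq A = frobSq BN + ℓ * Δ) :
    ((ℓ : ℝ) - k) * Δ ≤ frobSq (A - Ak) := by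
  classical
  set E := EuclideanSpace ℝ (Fin d)
  set W : Submodule ℝ E := (Submodule.span ℝ (Set.range Ak)).map ((evL d) : (Fin d → ℝ) →ₗ[ℝ] EuclideanSpace ℝ (Fin d)) with hW
  have hfr : Module.finrank ℝ W = Ak.rank := by
    rw [hW, LinearEquiv.finrank_map_eq, Matrix.rank_eq_finrank_span_row]
    rfl
  set r := Module.finrank ℝ W with hr
  have hrk : r ≤ k := by rw [hfr]; exact hrank
  set ob := stdOrthonormalBasis ℝ W with hob
  set u : Fin r → E := fun j => (ob j : E) with hu_def
  have hu : Orthonormal ℝ u := by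
    rw [orthonormal_iff_ite]
    intro i j
    have := orthonormal_iff_ite.mp ob.orthonormal i j
    rwa [Submodule.coe_inner] at this
  have hu_norm : ∀ j, ‖u j‖ = 1 := hu.1
  -- Parseval on W
  have hParseval : ∀ w : W, ‖(w : E)‖ ^ 2 = ∑ j, ⟪u j, (w : E)⟫_ℝ ^ 2 := by
    intro w
    have h1 : ‖(w : E)‖ = ‖w‖ := rfl
    have h2 : ‖w‖ = ‖ob.repr w‖ := (ob.repr.norm_map w).symm
    have h3 : ‖ob.repr w‖ ^ 2 = ∑ j, (ob.repr w j) ^ 2 := by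
      rw [EuclideanSpace.norm_eq, Real.sq_sqrt (by positivity)]
      congr 1; funext j; rw [Real.norm_eq_abs, sq_abs]
    rw [h1, h2, h3]
    congr 1; funext j
    rw [ob.repr_apply_apply, Submodule.coe_inner]
  -- Bessel
  have hBessel : ∀ x : E, ∑ j, ⟪u j, x⟫_ℝ ^ 2 ≤ ‖x‖ ^ 2 := by
    intro x
    have := Orthonormal.sum_inner_products_le (s := Finset.univ) x hu
    simpa [Real.norm_eq_abs, sq_abs] using this
  -- Per-row inequality
  have row : ∀ (a c : E), c ∈ W → ‖a‖ ^ 2 - ∑ j, ⟪u j, a⟫_ℝ ^ 2 ≤ ‖a - c‖ ^ 2 := by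
    intro a c hc
    set p : E := ((W.orthogonalProjectionOnto a : W) : E) with hp
    have hpW : p ∈ W := SetLike.coe_mem _
    have horth : ∀ w ∈ W, ⟪a - p, w⟫_ℝ = 0 := fun w hw =>
      Submodule.starProjection_inner_eq_zero (K := W) a w hw
    have h1 : ‖a - c‖ ^ 2 = ‖a - p‖ ^ 2 + ‖p - c‖ ^ 2 := by
      have : a - c = (a - p) + (p - c) := by abel
      rw [this, norm_add_sq_real, horth _ (Submodule.sub_mem W hpW hc)]
      ring
    have h2 : ‖a‖ ^ 2 = ‖a - p‖ ^ 2 + ‖p‖ ^ 2 := by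
      have : a = (a - p) + p := by abel
      conv_lhs => rw [this]
      rw [norm_add_sq_real, horth _ hpW]
      ring
    have h3 : ‖p‖ ^ 2 = ∑ j, ⟪u j, a⟫_ℝ ^ 2 := by
      rw [show ‖p‖ ^ 2 = ∑ j, ⟪u j, p⟫_ℝ ^ 2 from hParseval _]
      congr 1; funext j
      have huW : u j ∈ W := SetLike.coe_mem _
      have : ⟪u j, a⟫_ℝ - ⟪u j, p⟫_ℝ = ⟪u j, a - p⟫_ℝ := (inner_sub_right _ _ _).symm
      have hz : ⟪u j, a - p⟫_ℝ = 0 := by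
        rw [real_inner_comm]; exact horth _ huW
      have : ⟪u j, p⟫_ℝ = ⟪u j, a⟫_ℝ := by
        have := this; rw [hz] at this; linarith
      rw [this]
    nlinarith [sq_nonneg ‖p - c‖]
  -- rows of Ak are in W
  have hAkW : ∀ i, ev (Ak i) ∈ W := by
    intro i
    exact Submodule.mem_map_of_mem (Submodule.subset_span (Set.mem_range_self i))
  -- inner products with rows of a matrix
  have hinner_row : ∀ (m : ℕ) (M : Matrix (Fin m) (Fin d) ℝ) (j : Fin r) (i : Fin m),
      ⟪u j, ev (M i)⟫_ℝ = (M *ᵥ (fun t => u j t)) i := by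
    intro m M j i
    have h1 : ev (fun t => u j t) = u j := rfl
    rw [← h1, inner_ev]
    exact dotProduct_comm _ _
  -- main chain
  have step1 : frobSq A - ∑ j, (fun t => u j t) ⬝ᵥ ((Aᵀ * A) *ᵥ (fun t => u j t))
      ≤ frobSq (A - Ak) := by
    have hterm : ∀ j, (fun t => u j t) ⬝ᵥ ((Aᵀ * A) *ᵥ (fun t => u j t))
        = ∑ i, ⟪u j, ev (A i)⟫_ℝ ^ 2 := by
      intro j
      rw [gram_dot, dot_self_eq_sum_sq]
      congr 1
    calc frobSq A - ∑ j, (fun t => u j t) ⬝ᵥ ((Aᵀ * A) *ᵥ (fun t => u j t))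
        = ∑ i, (‖ev (A i)‖ ^ 2 - ∑ j, ⟪u j, ev (A i)⟫_ℝ ^ 2) := by
          rw [Finset.sum_sub_distrib, ← frobSq_eq_sum_rows]
          congr 1
          rw [Finset.sum_congr rfl (fun j _ => hterm j), Finset.sum_comm]
      _ ≤ ∑ i, ‖ev (A i) - ev (Ak i)‖ ^ 2 :=
          Finset.sum_le_sum fun i _ => row _ _ (hAkW i)
      _ = frobSq (A - Ak) := by
          rw [frobSq_eq_sum_rows]
          congr 1
  have step2 : ∀ j : Fin r, (fun t => u j t) ⬝ᵥ ((Aᵀ * A) *ᵥ (fun t => u j t))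
      ≤ (fun t => u j t) ⬝ᵥ ((BNᵀ * BN) *ᵥ (fun t => u j t)) + Δ := by
    intro j
    have hnorm1 : (fun t => u j t) ⬝ᵥ (fun t => u j t) = 1 := by
      have : ev (fun t => u j t) = u j := rfl
      rw [← norm_ev_sq, this, hu_norm j, one_pow]
    rw [hG, Matrix.add_mulVec, dotProduct_add]
    have := hquad (fun t => u j t)
    rw [hnorm1, mul_one] at this
    linarith
  have step3 : ∑ j, (fun t => u j t) ⬝ᵥ ((BNᵀ * BN) *ᵥ (fun t => u j t)) ≤ frobSq BN := by
    have hterm : ∀ j, (fun t => u j t) ⬝ᵥ ((BNᵀ * BN) *ᵥ (fun t => u j t))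
        = ∑ i, ⟪u j, ev (BN i)⟫_ℝ ^ 2 := by
      intro j
      rw [gram_dot, dot_self_eq_sum_sq]
      congr 1
    rw [Finset.sum_congr rfl (fun j _ => hterm j), Finset.sum_comm]
    rw [frobSq_eq_sum_rows]
    exact Finset.sum_le_sum fun i _ => hBessel (ev (BN i))
  -- combine
  have hsum2 : ∑ j, (fun t => u j t) ⬝ᵥ ((Aᵀ * A) *ᵥ (fun t => u j t))
      ≤ frobSq BN + r * Δ := by
    calc ∑ j, (fun t => u j t) ⬝ᵥ ((Aᵀ * A) *ᵥ (fun t => u j t))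
        ≤ ∑ j : Fin r, ((fun t => u j t) ⬝ᵥ ((BNᵀ * BN) *ᵥ (fun t => u j t)) + Δ) :=
          Finset.sum_le_sum fun j _ => step2 j
      _ = (∑ j, (fun t => u j t) ⬝ᵥ ((BNᵀ * BN) *ᵥ (fun t => u j t))) + r * Δ := by
          rw [Finset.sum_add_distrib]
          simp
      _ ≤ frobSq BN + r * Δ := by linarith [step3]
  have hrkR : (r : ℝ) ≤ (k : ℝ) := Nat.cast_le.mpr hrk
  have : frobSq A - (frobSq BN + r * Δ) ≤ frobSq (A - Ak) := by linarith
  have hrΔ : (r : ℝ) * Δ ≤ k * Δ := mul_le_mul_of_nonneg_right hrkR hΔ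
  have hl : (ℓ : ℝ) * Δ = frobSq A - frobSq BN := by linarith
  linarith

lemma gram_updateRow {ℓ d : ℕ} (B : Matrix (Fin ℓ) (Fin d) ℝ) (r : Fin ℓ) (a : Fin d → ℝ)
    (hr : B r = 0) :
    (B.updateRow r a)ᵀ * (B.updateRow r a) = Bᵀ * B + vecMulVec a a := by
  ext i j
  simp only [Matrix.mul_apply, Matrix.add_apply, Matrix.transpose_apply, vecMulVec_apply,
    Matrix.updateRow_apply]
  rw [← Finset.sum_erase_add _ _ (Finset.mem_univ r), ← Finset.sum_erase_add _ _ (Finset.mem_univ r)]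
  simp only [if_pos rfl]
  have : ∀ t ∈ Finset.univ.erase r, (if t = r then a i else B t i) * (if t = r then a j else B t j) = B t i * B t j := by
    intro t ht
    rw [if_neg (Finset.ne_of_mem_erase ht), if_neg (Finset.ne_of_mem_erase ht)]
  rw [Finset.sum_congr rfl this, hr]
  simp
lemma fdstep_gram {ℓ d : ℕ} (hℓ : 0 < ℓ) (B B' : Matrix (Fin ℓ) (Fin d) ℝ) (a : Fin d → ℝ)
    (h : FDStep hℓ B B' a) :
    ∃ (δ : ℝ) (V : Matrix (Fin d) (Fin ℓ) ℝ), 0 ≤ δ ∧ Vᵀ * V = 1 ∧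
      Bᵀ * B + vecMulVec a a = B'ᵀ * B' + δ • (V * Vᵀ) := by
  obtain ⟨hr, σ, V, hV, hanti, hσ, hgram, hB'⟩ := h
  set r : Fin ℓ := ⟨ℓ - 1, by omega⟩ with hrdef
  set δ : ℝ := σ r ^ 2 with hδ
  refine ⟨δ, V, sq_nonneg _, hV, ?_⟩
  have hge : ∀ i : Fin ℓ, δ ≤ σ i ^ 2 := by
    intro i
    have hile : i ≤ r := by
      rw [Fin.le_def, hrdef]
      exact Nat.le_sub_one_of_lt i.2
    exact pow_le_pow_left₀ (hσ r) (hanti hile) 2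
  have hB'B' : B'ᵀ * B' = V * Matrix.diagonal (fun i => σ i ^ 2 - δ) * Vᵀ := by
    rw [hB', Matrix.transpose_mul, Matrix.transpose_transpose, Matrix.diagonal_transpose,
      Matrix.mul_assoc, ← Matrix.mul_assoc (Matrix.diagonal _), Matrix.diagonal_mul_diagonal,
      ← Matrix.mul_assoc]
    have heq : (fun i => Real.sqrt (max (σ i ^ 2 - δ) 0) * Real.sqrt (max (σ i ^ 2 - δ) 0))
        = fun i => σ i ^ 2 - δ := by
      funext i
      rw [Real.mul_self_sqrt (le_max_right _ 0), max_eq_left (by linarith [hge i])]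
    rw [heq]
  rw [← gram_updateRow B r a hr, hgram, hB'B']
  have h1 : δ • (V * Vᵀ) = V * (δ • (1 : Matrix (Fin ℓ) (Fin ℓ) ℝ)) * Vᵀ := by
    rw [Matrix.mul_smul, Matrix.mul_one, Matrix.smul_mul]
  rw [h1, ← Matrix.add_mul, ← Matrix.mul_add]
  congr 2
  ext i j
  by_cases hij : i = j <;>
    simp [Matrix.diagonal_apply, Matrix.one_apply, hij] <;> ring

lemma transpose_mul_self_eq_sum {n d : ℕ} (A : Matrix (Fin n) (Fin d) ℝ) :
    Aᵀ * A = ∑ t : Fin n, vecMulVec (A t) (A t) := by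
  ext i j
  simp [Matrix.mul_apply, Matrix.sum_apply, vecMulVec_apply]

lemma telescope {n : ℕ} {M : Type*} [AddCommGroup M]
    (G : Fin (n+1) → M) (f P : Fin n → M)
    (h0 : G 0 = 0)
    (hstep : ∀ t : Fin n, G t.castSucc + f t = G t.succ + P t) :
    G (Fin.last n) + ∑ t, P t = ∑ t, f t := by
  have key : ∀ j : ℕ, (hj : j ≤ n) →
      G ⟨j, Nat.lt_succ_of_le hj⟩ + ∑ t : Fin n, (if (t:ℕ) < j then P t else 0)
        = ∑ t : Fin n, (if (t:ℕ) < j then f t else 0) := by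
    intro j
    induction j with
    | zero => intro hj; simpa using h0
    | succ j ih =>
      intro hj
      have hjn : j < n := hj
      set t0 : Fin n := ⟨j, hjn⟩ with ht0
      have hsplit : ∀ (g : Fin n → M),
          ∑ t : Fin n, (if (t:ℕ) < j+1 then g t else 0)
            = (∑ t : Fin n, (if (t:ℕ) < j then g t else 0)) + g t0 := by
        intro g
        rw [← Finset.sum_erase_add _ _ (Finset.mem_univ t0),
            ← Finset.sum_erase_add _ _ (Finset.mem_univ t0)]
        have h1 : ((if ((t0:ℕ)) < j then g t0 else 0) : M) = 0 := by
          rw [if_neg]; simp [ht0]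
        have h2 : ((if ((t0:ℕ)) < j + 1 then g t0 else 0) : M) = g t0 := by
          rw [if_pos]; simp [ht0]
        rw [h1, h2, add_zero]
        congr 1
        apply Finset.sum_congr rfl
        intro t ht
        have htne : (t:ℕ) ≠ j := by
          intro hc
          exact (Finset.ne_of_mem_erase ht) (Fin.ext hc)
        by_cases h : (t:ℕ) < j
        · rw [if_pos (by omega), if_pos h]
        · rw [if_neg (by omega), if_neg h]
      have hstep0 := hstep t0
      have hc : t0.castSucc = ⟨j, Nat.lt_succ_of_le (le_of_lt hjn)⟩ := rfl
      have hs : t0.succ = ⟨j+1, Nat.lt_succ_of_le hj⟩ := rfl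
      rw [hsplit P, hsplit f, ← ih (le_of_lt hjn), ← add_assoc]
      rw [hc, hs] at hstep0
      rw [add_right_comm, add_right_comm (G ⟨j, Nat.lt_succ_of_le (le_of_lt hjn)⟩) _ (f t0), ← hstep0]
  have := key n le_rfl
  simpa [Fin.last] using this

lemma dot_sum {d N : ℕ} (v : Fin d → ℝ) (w : Fin N → (Fin d → ℝ)) :
    v ⬝ᵥ (∑ t, w t) = ∑ t, v ⬝ᵥ w t := by
  simp only [dotProduct, Finset.sum_apply, Finset.mul_sum]
  exact Finset.sum_comm

end FDAux

/-- the Frequent Directions sketch `B` (obtained by processing the rows of `A`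
one at a time, starting from the zero sketch) satisfies
`‖AᵀA − BᵀB‖₂ ≤ ‖A − A_k‖_F² / (ℓ − k)` for every `k < ℓ`. -/
theorem stmt8 {n d ℓ k : ℕ} (hℓ : 0 < ℓ) (hk : k < ℓ)
    (A : Matrix (Fin n) (Fin d) ℝ)
    (B : Fin (n + 1) → Matrix (Fin ℓ) (Fin d) ℝ)
    (hB0 : B 0 = 0)
    (hstep : ∀ t : Fin n, FDStep hℓ (B t.castSucc) (B t.succ) (A t))
    (Ak : Matrix (Fin n) (Fin d) ℝ) (hAk : IsBestRankApprox A Ak k) :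
    specNorm (Aᵀ * A - (B (Fin.last n))ᵀ * B (Fin.last n)) ≤
      frobNorm (A - Ak) ^ 2 / ((ℓ : ℝ) - k) := by
  classical
  open FDAux in
  have hGram := fun t => FDAux.fdstep_gram hℓ _ _ _ (hstep t)
  choose δ V hδ0 hV hgram using hGram
  set P : Fin n → Matrix (Fin d) (Fin d) ℝ := fun t => δ t • (V t * (V t)ᵀ) with hP
  have htel := FDAux.telescope (n := n) (fun j => (B j)ᵀ * B j)
    (fun t => vecMulVec (A t) (A t)) P (by show (B 0)ᵀ * B 0 = 0; rw [hB0]; simp) (fun t => hgram t)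
  rw [← FDAux.transpose_mul_self_eq_sum] at htel
  have hG : Aᵀ * A - (B (Fin.last n))ᵀ * B (Fin.last n) = ∑ t, P t := by
    rw [← htel]; abel
  set Δ := ∑ t, δ t with hΔdef
  have hΔ0 : 0 ≤ Δ := Finset.sum_nonneg fun t _ => hδ0 t
  have hspec : specNorm (Aᵀ * A - (B (Fin.last n))ᵀ * B (Fin.last n)) ≤ Δ := by
    rw [hG]
    exact FDAux.specNorm_sum_proj_le δ V hδ0 hV
  have hquad : ∀ u : Fin d → ℝ, u ⬝ᵥ ((∑ t, P t) *ᵥ u) ≤ Δ * (u ⬝ᵥ u) := by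
    intro u
    rw [FDAux.sum_mulVec, FDAux.dot_sum]
    calc ∑ t, u ⬝ᵥ ((P t) *ᵥ u) ≤ ∑ t, δ t * (u ⬝ᵥ u) := by
          apply Finset.sum_le_sum
          intro t _
          rw [hP, Matrix.smul_mulVec, dotProduct_smul, smul_eq_mul]
          exact mul_le_mul_of_nonneg_left (FDAux.proj_dot_le (V t) (hV t) u) (hδ0 t)
      _ = Δ * (u ⬝ᵥ u) := by rw [hΔdef, Finset.sum_mul]
  have htrace : FDAux.frobSq A = FDAux.frobSq (B (Fin.last n)) + ℓ * Δ := by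
    have h1 : (Aᵀ * A).trace = ((B (Fin.last n))ᵀ * B (Fin.last n)).trace + (∑ t, P t).trace := by
      rw [← htel, Matrix.trace_add]
    have h2 : (∑ t, P t).trace = ℓ * Δ := by
      rw [Matrix.trace_sum]
      have : ∀ t ∈ Finset.univ, (P t).trace = δ t * ℓ :=
        fun t _ => FDAux.trace_proj (δ t) (V t) (hV t)
      rw [Finset.sum_congr rfl this, ← Finset.sum_mul, hΔdef, mul_comm]
    rw [FDAux.frobSq_eq_trace, FDAux.frobSq_eq_trace, h1, h2]
  have hABG : Aᵀ * A = (B (Fin.last n))ᵀ * B (Fin.last n) + ∑ t, P t := htel.symm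
  have hlow := FDAux.lower_bound A Ak (B (Fin.last n)) (∑ t, P t) Δ hΔ0 hAk.1
    hABG hquad htrace
  have hf : frobNorm (A - Ak) ^ 2 = FDAux.frobSq (A - Ak) := FDAux.frobNorm_sq _
  have hlk : (0:ℝ) < (ℓ : ℝ) - k := by
    have : (k:ℝ) < ℓ := Nat.cast_lt.mpr hk
    linarith
  rw [le_div_iff₀ hlk]
  calc specNorm (Aᵀ * A - (B (Fin.last n))ᵀ * B (Fin.last n)) * ((ℓ:ℝ) - k)
      ≤ Δ * ((ℓ:ℝ) - k) := mul_le_mul_of_nonneg_right hspec (le_of_lt hlk)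
    _ = ((ℓ:ℝ) - k) * Δ := mul_comm _ _
    _ ≤ FDAux.frobSq (A - Ak) := hlow
    _ = frobNorm (A - Ak) ^ 2 := hf.symm
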